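/- Let A be a finite alphabet, S ⊆ A^{ℤ²} a set of configurations, and P_1,…,P_n the (finitely many) 2×2 patterns that appear in some configuration of S. Let σ be a two-dimensional substitution that is 𝒫-domino-complete for 𝒫 = {P_1,…,P_n}, i.e., C_σ equals the set of dominoes appearing (up to translation) in the patterns P_1,…,P_n. Then σ is consistent on every C_σ-covered pattern that appears in a configuration of S if and only if σ is consistent on each of the patterns P_1,…,P_n. -/

import Mathlib

open scoped Classical

/-- A combinatorial substitution on alphabet `A` with vectors in `V`:
a base rule sending each letter to a pattern, together with a deterministic
finite set of concatenation rules.  `rule t t' u = some v` encodes the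
concatenation rule `(t, t', u) ↦ v`. -/
structure Subst (A : Type*) (V : Type*) [AddCommGroup V] where
  /-- the base rule -/
  base : A → Finset (V × A)
  /-- the image of a letter is a pattern: its cells have distinct vectors -/
  basePat : ∀ t : A, ∀ c ∈ base t, ∀ c' ∈ base t, c.1 = c'.1 → c = c'
  /-- the concatenation rules, as a partial function -/
  rule : A → A → V → Option V
  /-- there are finitely many concatenation rules -/
  finiteRules : {u : V | ∃ t t', rule t t' u ≠ none}.Finite
  /-- determinism: no two rules with left-hand sides `(t,t',u)` and `(t,t',-u)` -/
  det : ∀ t t' u, (rule t t' u).isSome → (rule t t' (-u)).isSome → u = -u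

/-- A pattern is a finite set of cells with pairwise distinct vectors. -/
def IsPattern {V A : Type*} (P : Finset (V × A)) : Prop :=
  ∀ c ∈ P, ∀ c' ∈ P, c.1 = c'.1 → c = c'

namespace Subst

variable {A V : Type*} [AddCommGroup V]

/-- `σ_rule(c, c')`: the relative position of the images of the two cells
`c`, `c'`, when some concatenation rule applies to them. -/
def ruleVec (σ : Subst A V) (c c' : V × A) : Option V :=
  match σ.rule c.2 c'.2 (c'.1 - c.1) with
  | some v => some v
  | none => (σ.rule c'.2 c.2 (c.1 - c'.1)).map (fun v => -v)

/-- The image vector `ω_σ(γ)` of a path `γ`. -/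
def omega (σ : Subst A V) (γ : List (V × A)) : V :=
  ((γ.zip γ.tail).map (fun p => (σ.ruleVec p.1 p.2).getD 0)).sum

/-- A `C_σ`-path: a nonempty sequence of cells in which any two consecutive
cells form a translated copy of a starting pattern of `σ`, and any two cells
with the same vector are equal. -/
def IsPath (σ : Subst A V) (γ : List (V × A)) : Prop :=
  γ ≠ [] ∧ γ.Chain' (fun c c' => (σ.ruleVec c c').isSome) ∧
    ∀ c ∈ γ, ∀ c' ∈ γ, c.1 = c'.1 → c = c'

/-- A `C_σ`-path of the pattern `P`. -/
def IsPathOf (σ : Subst A V) (P : Finset (V × A)) (γ : List (V × A)) : Prop :=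
  σ.IsPath γ ∧ ∀ c ∈ γ, c ∈ P

/-- A `C_σ`-loop of the pattern `P`. -/
def IsLoopOf (σ : Subst A V) (P : Finset (V × A)) (γ : List (V × A)) : Prop :=
  σ.IsPathOf P γ ∧ γ.head? = γ.getLast?

/-- `P` is `C_σ`-covered: any two of its cells are joined by a `C_σ`-path of `P`. -/
def Covered (σ : Subst A V) (P : Finset (V × A)) : Prop :=
  ∀ c ∈ P, ∀ c' ∈ P,
    ∃ γ, σ.IsPathOf P γ ∧ γ.head? = some c ∧ γ.getLast? = some c'

/-- `σ` is consistent on `P`: any two `C_σ`-paths of `P` with the same first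
and last cells have the same image vector. -/
def ConsistentOn (σ : Subst A V) (P : Finset (V × A)) : Prop :=
  ∀ γ γ' : List (V × A), σ.IsPathOf P γ → σ.IsPathOf P γ' →
    γ.head? = γ'.head? → γ.getLast? = γ'.getLast? → σ.omega γ = σ.omega γ'

/-- `σ` is consistent: it is consistent on every `C_σ`-covered pattern. -/
def Consistent (σ : Subst A V) : Prop :=
  ∀ P : Finset (V × A), IsPattern P → σ.Covered P → σ.ConsistentOn P

/-- The support of the image of a letter. -/
noncomputable def supp (σ : Subst A V) (t : A) : Finset V :=
  (σ.base t).image Prod.fst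

/-- `σ` is non-overlapping on `P`: the images of two distinct cells of `P`
joined by a `C_σ`-path of `P` have disjoint supports. -/
def NonOverlappingOn (σ : Subst A V) (P : Finset (V × A)) : Prop :=
  ∀ c ∈ P, ∀ c' ∈ P, c ≠ c' → ∀ γ, σ.IsPathOf P γ →
    γ.head? = some c → γ.getLast? = some c' →
    ∀ b ∈ σ.supp c'.2, σ.omega γ + b ∉ σ.supp c.2

/-- `σ` is non-overlapping: it is non-overlapping on every `C_σ`-covered pattern. -/
def NonOverlapping (σ : Subst A V) : Prop :=
  ∀ P : Finset (V × A), IsPattern P → σ.Covered P → σ.NonOverlappingOn P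

end Subst

/-- A domino: a two-cell two-dimensional pattern whose vectors differ by
`(1,0)`, `(-1,0)`, `(0,1)` or `(0,-1)`. -/
def IsDomino {A : Type*} (P : Finset ((ℤ × ℤ) × A)) : Prop :=
  ∃ (v u : ℤ × ℤ) (t t' : A), (u = (1, 0) ∨ u = (0, 1)) ∧
    P = {(v, t), (v + u, t')}

/-- A `2 × 2` pattern: a pattern whose support is a translate of
`{0,1} × {0,1}`. -/
def IsTwoByTwo {A : Type*} (P : Finset ((ℤ × ℤ) × A)) : Prop :=
  IsPattern P ∧ ∃ w : ℤ × ℤ,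
    P.image Prod.fst = ({w, w + (1, 0), w + (0, 1), w + (1, 1)} : Finset (ℤ × ℤ))

/-- A two-dimensional substitution is domino-complete when its starting
patterns are exactly all the dominoes. -/
def Subst.DominoComplete {A : Type*} (σ : Subst A (ℤ × ℤ)) : Prop :=
  (∀ (t t' : A) (u : ℤ × ℤ), σ.rule t t' u ≠ none →
      u = (1, 0) ∨ u = (-1, 0) ∨ u = (0, 1) ∨ u = (0, -1)) ∧
  ∀ t t' : A,
    (σ.ruleVec ((0, 0), t) ((1, 0), t')).isSome ∧
    (σ.ruleVec ((0, 0), t) ((0, 1), t')).isSome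

/-- The pattern `P` appears in the configuration `x` (up to a translation). -/
def AppearsIn {A : Type*} (x : (ℤ × ℤ) → A) (P : Finset ((ℤ × ℤ) × A)) : Prop :=
  ∃ w : ℤ × ℤ, ∀ c ∈ P, x (c.1 + w) = c.2

/-- The pattern `P` appears in some configuration of `S`. -/
def AppearsInSys {A : Type*} (S : Set ((ℤ × ℤ) → A))
    (P : Finset ((ℤ × ℤ) × A)) : Prop :=
  ∃ x ∈ S, AppearsIn x P

/-- `σ` is `𝒫`-domino-complete, where `𝒫` is the set of `2 × 2` patterns
appearing in configurations of `S`: the starting patterns of `σ` are exactly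
the dominoes appearing (up to translation) in the patterns of `𝒫`,
equivalently the dominoes appearing in configurations of `S`. -/
def PDominoComplete {A : Type*} (σ : Subst A (ℤ × ℤ))
    (S : Set ((ℤ × ℤ) → A)) : Prop :=
  (∀ (t t' : A) (u : ℤ × ℤ), σ.rule t t' u ≠ none →
      IsDomino ({(((0 : ℤ), (0 : ℤ)), t), (u, t')} : Finset ((ℤ × ℤ) × A)) ∧
      AppearsInSys S ({(((0 : ℤ), (0 : ℤ)), t), (u, t')} : Finset ((ℤ × ℤ) × A))) ∧
  ∀ P : Finset ((ℤ × ℤ) × A), IsDomino P → AppearsInSys S P →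
    ∀ c ∈ P, ∀ c' ∈ P, c ≠ c' → (σ.ruleVec c c').isSome


def zsum {W : Type*} [AddCommGroup W] (g : ℤ → W) (n : ℤ) : W :=
  if 0 ≤ n then ∑ k ∈ Finset.range n.toNat, g k
  else - ∑ k ∈ Finset.range (-n).toNat, g (-(k+1))

lemma zsum_zero {W : Type*} [AddCommGroup W] (g : ℤ → W) : zsum g 0 = 0 := by
  simp [zsum]

lemma zsum_succ {W : Type*} [AddCommGroup W] (g : ℤ → W) (n : ℤ) :
    zsum g (n + 1) = zsum g n + g n := by
  rcases le_or_gt 0 n with hn | hn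
  · rw [zsum, zsum, if_pos (by omega), if_pos hn,
      show (n+1).toNat = n.toNat + 1 by omega, Finset.sum_range_succ,
      Int.toNat_of_nonneg hn]
  · rcases eq_or_lt_of_le (by omega : n + 1 ≤ 0) with h0 | h0
    · rw [show n = -1 by omega]
      simp [zsum]
    · rw [zsum, zsum, if_neg (by omega), if_neg (by omega),
        show (-n).toNat = (-(n+1)).toNat + 1 by omega, Finset.sum_range_succ]
      have : (-(((-(n+1)).toNat : ℤ) + 1)) = n := by
        have := Int.toNat_of_nonneg (by omega : (0:ℤ) ≤ -(n+1))
        omega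
      rw [this]
      abel

lemma zsum_sub {W : Type*} [AddCommGroup W] (g g' : ℤ → W) (n : ℤ) :
    zsum (fun k => g k - g' k) n = zsum g n - zsum g' n := by
  induction n using Int.induction_on with
  | zero => simp [zsum_zero]
  | succ n ih => rw [zsum_succ, zsum_succ, zsum_succ, ih]; abel
  | pred n ih =>
      have h1 := zsum_succ (fun k => g k - g' k) (-(n:ℤ) - 1)
      have h2 := zsum_succ g (-(n:ℤ) - 1)
      have h3 := zsum_succ g' (-(n:ℤ) - 1)
      simp only [sub_add_cancel] at h1 h2 h3
      rw [ih] at h1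
      rw [eq_sub_of_add_eq h1.symm, h2, h3]
      abel

lemma zsum_telescope {W : Type*} [AddCommGroup W] (φ : ℤ → W) (n : ℤ) :
    zsum (fun k => φ (k + 1) - φ k) n = φ n - φ 0 := by
  induction n using Int.induction_on with
  | zero => simp [zsum_zero]
  | succ n ih => rw [zsum_succ, ih]; abel
  | pred n ih =>
      have h1 := zsum_succ (fun k => φ (k + 1) - φ k) (-(n:ℤ) - 1)
      simp only [sub_add_cancel] at h1
      rw [ih] at h1
      rw [eq_sub_of_add_eq h1.symm]
      abel
section Aux

variable {A : Type*}

/-- translation invariance of `ruleVec` -/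
lemma ruleVec_translate (σ : Subst A (ℤ × ℤ)) (u u' w : ℤ × ℤ) (t t' : A) :
    σ.ruleVec (u + w, t) (u' + w, t') = σ.ruleVec (u, t) (u', t') := by
  simp [Subst.ruleVec, add_sub_add_right_eq_sub]

/-- the edge cocycle of a configuration -/
noncomputable def fce (σ : Subst A (ℤ × ℤ)) (x : (ℤ × ℤ) → A) (u u' : ℤ × ℤ) : ℤ × ℤ :=
  (σ.ruleVec (u, x u) (u', x u')).getD 0

lemma omega_cons (σ : Subst A (ℤ × ℤ)) (c c' : (ℤ × ℤ) × A) (l : List ((ℤ × ℤ) × A)) :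
    σ.omega (c :: c' :: l) = (σ.ruleVec c c').getD 0 + σ.omega (c' :: l) := by
  simp [Subst.omega]

lemma omega_single (σ : Subst A (ℤ × ℤ)) (c : (ℤ × ℤ) × A) : σ.omega [c] = 0 := by
  simp [Subst.omega]

lemma mk_path (σ : Subst A (ℤ × ℤ)) (P : Finset ((ℤ × ℤ) × A)) (hP : IsPattern P)
    (l : List ((ℤ × ℤ) × A)) (hne : l ≠ [])
    (hch : l.Chain' (fun c c' => (σ.ruleVec c c').isSome)) (hm : ∀ c ∈ l, c ∈ P) :
    σ.IsPathOf P l :=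
  ⟨⟨hne, hch, fun c hc c' hc' => hP c (hm c hc) c' (hm c' hc')⟩, hm⟩

lemma isDomino_vec (t t' : A) (u : ℤ × ℤ)
    (hd : IsDomino ({(((0:ℤ),(0:ℤ)), t), (u, t')} : Finset ((ℤ × ℤ) × A))) :
    u = (1,0) ∨ u = (-1,0) ∨ u = (0,1) ∨ u = (0,-1) := by
  obtain ⟨v, u0, t0, t0', hu0, heq⟩ := hd
  have h1 : ((v, t0) : (ℤ × ℤ) × A) ∈ ({(((0:ℤ),(0:ℤ)), t), (u, t')} : Finset ((ℤ × ℤ) × A)) := by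
    rw [heq]; simp
  have h2 : ((v + u0, t0') : (ℤ × ℤ) × A) ∈ ({(((0:ℤ),(0:ℤ)), t), (u, t')} : Finset ((ℤ × ℤ) × A)) := by
    rw [heq]; simp
  obtain ⟨v1, v2⟩ := v
  obtain ⟨u1, u2⟩ := u
  obtain ⟨a1, a2⟩ := u0
  have hu0' : (a1 = 1 ∧ a2 = 0) ∨ (a1 = 0 ∧ a2 = 1) := by
    rcases hu0 with h | h <;> simp [Prod.ext_iff] at h <;> tauto
  simp only [Finset.mem_insert, Finset.mem_singleton, Prod.mk.injEq, Prod.mk_add_mk,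
    Prod.ext_iff] at h1 h2 ⊢
  rcases h1 with ⟨⟨e1, e2⟩, -⟩ | ⟨⟨e1, e2⟩, -⟩ <;>
    rcases h2 with ⟨⟨f1, f2⟩, -⟩ | ⟨⟨f1, f2⟩, -⟩ <;> omega

lemma diff_of_isSome {S : Set ((ℤ × ℤ) → A)} (σ : Subst A (ℤ × ℤ))
    (h : PDominoComplete σ S) (c c' : (ℤ × ℤ) × A) (hs : (σ.ruleVec c c').isSome) :
    c'.1 - c.1 = (1,0) ∨ c'.1 - c.1 = (-1,0) ∨ c'.1 - c.1 = (0,1) ∨ c'.1 - c.1 = (0,-1) := by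
  have hcases : σ.rule c.2 c'.2 (c'.1 - c.1) ≠ none ∨ σ.rule c'.2 c.2 (c.1 - c'.1) ≠ none := by
    unfold Subst.ruleVec at hs
    rcases hr : σ.rule c.2 c'.2 (c'.1 - c.1) with _ | v
    · rw [hr] at hs
      right
      simp only [Option.isSome_map] at hs
      intro hn
      rw [hn] at hs
      simp at hs
    · left; simp [hr]
  rcases hcases with hr | hr
  · exact isDomino_vec _ _ _ (h.1 _ _ _ hr).1
  · have := isDomino_vec _ _ _ (h.1 _ _ _ hr).1
    have hd : c.1 - c'.1 = -(c'.1 - c.1) := by abel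
    rw [hd] at this
    revert this
    generalize c'.1 - c.1 = d
    obtain ⟨d1, d2⟩ := d
    intro this
    simp only [Prod.neg_mk, Prod.mk.injEq, Prod.ext_iff] at this ⊢
    omega

lemma adj_isSome {S : Set ((ℤ × ℤ) → A)} (σ : Subst A (ℤ × ℤ))
    (h : PDominoComplete σ S) (x : (ℤ × ℤ) → A) (hx : x ∈ S) (w0 : ℤ × ℤ)
    (c c' : (ℤ × ℤ) × A) (hc : x (c.1 + w0) = c.2) (hc' : x (c'.1 + w0) = c'.2)
    (he : c'.1 = c.1 + (1,0) ∨ c'.1 = c.1 + (0,1)) :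
    (σ.ruleVec c c').isSome ∧ (σ.ruleVec c' c).isSome := by
  have hd : IsDomino ({c, c'} : Finset ((ℤ × ℤ) × A)) := by
    rcases he with he | he
    · exact ⟨c.1, (1,0), c.2, c'.2, Or.inl rfl, by rw [← he]⟩
    · exact ⟨c.1, (0,1), c.2, c'.2, Or.inr rfl, by rw [← he]⟩
  have ha : AppearsInSys S ({c, c'} : Finset ((ℤ × ℤ) × A)) := by
    refine ⟨x, hx, w0, ?_⟩
    intro cc hcc
    simp only [Finset.mem_insert, Finset.mem_singleton] at hcc
    rcases hcc with rfl | rfl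
    · exact hc
    · exact hc'
  have hne : c ≠ c' := by
    intro hcc
    rcases he with he | he <;> rw [← hcc] at he <;>
      · obtain ⟨p, q⟩ := c.1
        simp [Prod.ext_iff] at he
  exact ⟨h.2 _ hd ha c (by simp) c' (by simp) hne,
    h.2 _ hd ha c' (by simp) c (by simp) hne.symm⟩

end Aux
section Aux2

variable {A : Type*}

/-- the `2×2` square pattern of a configuration at `v` -/
noncomputable def sqpat (x : (ℤ × ℤ) → A) (v : ℤ × ℤ) : Finset ((ℤ × ℤ) × A) :=
  {(v, x v), (v + (1,0), x (v + (1,0))), (v + (0,1), x (v + (0,1))),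
    (v + (1,1), x (v + (1,1)))}

lemma pair_add_one (p q : ℤ) : ((p,q) : ℤ×ℤ) + 1 = (p+1, q+1) := rfl

lemma sq_cell (x : (ℤ × ℤ) → A) (v : ℤ × ℤ) : ∀ c ∈ sqpat x v, c.2 = x c.1 := by
  intro c hc
  simp only [sqpat, Finset.mem_insert, Finset.mem_singleton] at hc
  rcases hc with rfl | rfl | rfl | rfl <;> rfl

lemma sq_pattern (x : (ℤ × ℤ) → A) (v : ℤ × ℤ) : IsPattern (sqpat x v) := by
  intro c hc c' hc' h1
  exact Prod.ext h1 (by rw [sq_cell x v c hc, sq_cell x v c' hc', h1])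

lemma sq_twoByTwo (x : (ℤ × ℤ) → A) (v : ℤ × ℤ) : IsTwoByTwo (sqpat x v) :=
  ⟨sq_pattern x v, v, by simp [sqpat, Finset.image_insert, Finset.image_singleton]⟩

lemma sq_appears {S : Set ((ℤ × ℤ) → A)} (x : (ℤ × ℤ) → A) (hx : x ∈ S) (v : ℤ × ℤ) :
    AppearsInSys S (sqpat x v) :=
  ⟨x, hx, 0, fun c hc => by rw [add_zero, sq_cell x v c hc]⟩

lemma adjx1 {S : Set ((ℤ × ℤ) → A)} (σ : Subst A (ℤ × ℤ)) (h : PDominoComplete σ S)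
    (x : (ℤ × ℤ) → A) (hx : x ∈ S) (p q : ℤ) :
    (σ.ruleVec ((p,q), x (p,q)) ((p+1,q), x (p+1,q))).isSome ∧
    (σ.ruleVec ((p+1,q), x (p+1,q)) ((p,q), x (p,q))).isSome :=
  adj_isSome σ h x hx 0 _ _ (by simp) (by simp) (Or.inl (by simp))

lemma adjx2 {S : Set ((ℤ × ℤ) → A)} (σ : Subst A (ℤ × ℤ)) (h : PDominoComplete σ S)
    (x : (ℤ × ℤ) → A) (hx : x ∈ S) (p q : ℤ) :
    (σ.ruleVec ((p,q), x (p,q)) ((p,q+1), x (p,q+1))).isSome ∧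
    (σ.ruleVec ((p,q+1), x (p,q+1)) ((p,q), x (p,q))).isSome :=
  adj_isSome σ h x hx 0 _ _ (by simp) (by simp) (Or.inr (by simp))

variable {S : Set ((ℤ × ℤ) → A)} (σ : Subst A (ℤ × ℤ)) (x : (ℤ × ℤ) → A)

lemma relA1 (h : PDominoComplete σ S) (hx : x ∈ S)
    (H2 : ∀ P : Finset ((ℤ × ℤ) × A), IsTwoByTwo P → AppearsInSys S P → σ.ConsistentOn P)
    (p q : ℤ) : fce σ x (p,q) (p+1,q) + fce σ x (p+1,q) (p,q) = 0 := by
  have hcons := H2 _ (sq_twoByTwo x (p,q)) (sq_appears x hx (p,q))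
  set a : (ℤ × ℤ) × A := ((p,q), x (p,q)) with ha
  set b : (ℤ × ℤ) × A := ((p+1,q), x (p+1,q)) with hb
  have hm1 : a ∈ sqpat x (p,q) := by simp [sqpat, ha]
  have hm2 : b ∈ sqpat x (p,q) := by
    simp only [sqpat, Finset.mem_insert]
    right; left
    simp [hb]
  have hadj := adjx1 σ h x hx p q
  have h1 : σ.IsPathOf (sqpat x (p,q)) [a, b, a] :=
    mk_path σ _ (sq_pattern x (p,q)) _ (by simp)
      (by simp [List.Chain', List.isChain_cons_cons, ha, hb, hadj.1, hadj.2]) (by simp [hm1, hm2])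
  have h2 : σ.IsPathOf (sqpat x (p,q)) [a] :=
    mk_path σ _ (sq_pattern x (p,q)) _ (by simp) (by simp [List.Chain']) (by simp [hm1])
  have hc := hcons [a, b, a] [a] h1 h2 rfl rfl
  simp only [omega_cons, omega_single] at hc
  simpa [fce, ha, hb] using hc

lemma relA2 (h : PDominoComplete σ S) (hx : x ∈ S)
    (H2 : ∀ P : Finset ((ℤ × ℤ) × A), IsTwoByTwo P → AppearsInSys S P → σ.ConsistentOn P)
    (p q : ℤ) : fce σ x (p,q) (p,q+1) + fce σ x (p,q+1) (p,q) = 0 := by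
  have hcons := H2 _ (sq_twoByTwo x (p,q)) (sq_appears x hx (p,q))
  set a : (ℤ × ℤ) × A := ((p,q), x (p,q)) with ha
  set b : (ℤ × ℤ) × A := ((p,q+1), x (p,q+1)) with hb
  have hm1 : a ∈ sqpat x (p,q) := by simp [sqpat, ha]
  have hm2 : b ∈ sqpat x (p,q) := by
    simp only [sqpat, Finset.mem_insert]
    right; right; left
    simp [hb]
  have hadj := adjx2 σ h x hx p q
  have h1 : σ.IsPathOf (sqpat x (p,q)) [a, b, a] :=
    mk_path σ _ (sq_pattern x (p,q)) _ (by simp)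
      (by simp [List.Chain', List.isChain_cons_cons, ha, hb, hadj.1, hadj.2]) (by simp [hm1, hm2])
  have h2 : σ.IsPathOf (sqpat x (p,q)) [a] :=
    mk_path σ _ (sq_pattern x (p,q)) _ (by simp) (by simp [List.Chain']) (by simp [hm1])
  have hc := hcons [a, b, a] [a] h1 h2 rfl rfl
  simp only [omega_cons, omega_single] at hc
  simpa [fce, ha, hb] using hc

lemma relB (h : PDominoComplete σ S) (hx : x ∈ S)
    (H2 : ∀ P : Finset ((ℤ × ℤ) × A), IsTwoByTwo P → AppearsInSys S P → σ.ConsistentOn P)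
    (p q : ℤ) :
    fce σ x (p,q) (p+1,q) + fce σ x (p+1,q) (p+1,q+1)
      = fce σ x (p,q) (p,q+1) + fce σ x (p,q+1) (p+1,q+1) := by
  have hcons := H2 _ (sq_twoByTwo x (p,q)) (sq_appears x hx (p,q))
  set a : (ℤ × ℤ) × A := ((p,q), x (p,q)) with ha
  set b : (ℤ × ℤ) × A := ((p+1,q), x (p+1,q)) with hb
  set c : (ℤ × ℤ) × A := ((p,q+1), x (p,q+1)) with hcc
  set d : (ℤ × ℤ) × A := ((p+1,q+1), x (p+1,q+1)) with hd
  have hm1 : a ∈ sqpat x (p,q) := by simp [sqpat, ha]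
  have hm2 : b ∈ sqpat x (p,q) := by
    simp only [sqpat, Finset.mem_insert]; right; left; simp [hb]
  have hm3 : c ∈ sqpat x (p,q) := by
    simp only [sqpat, Finset.mem_insert]; right; right; left; simp [hcc]
  have hm4 : d ∈ sqpat x (p,q) := by
    simp only [sqpat, Finset.mem_insert, Finset.mem_singleton]; right; right; right; simp [hd, pair_add_one]
  have hab := adjx1 σ h x hx p q
  have hbd := adjx2 σ h x hx (p+1) q
  have hac := adjx2 σ h x hx p q
  have hcd := adjx1 σ h x hx p (q+1)
  have h1 : σ.IsPathOf (sqpat x (p,q)) [a, b, d] :=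
    mk_path σ _ (sq_pattern x (p,q)) _ (by simp)
      (by simp [List.Chain', List.isChain_cons_cons, ha, hb, hd, hab.1, hbd.1]) (by simp [hm1, hm2, hm4])
  have h2 : σ.IsPathOf (sqpat x (p,q)) [a, c, d] :=
    mk_path σ _ (sq_pattern x (p,q)) _ (by simp)
      (by simp [List.Chain', List.isChain_cons_cons, ha, hcc, hd, hac.1, hcd.1]) (by simp [hm1, hm3, hm4])
  have hc := hcons [a, b, d] [a, c, d] h1 h2 rfl rfl
  simp only [omega_cons, omega_single] at hc
  simpa [fce, ha, hb, hcc, hd] using hc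

end Aux2
section Aux3

variable {A : Type*}

/-- the potential function associated to the cocycle `fce` -/
noncomputable def pot (σ : Subst A (ℤ × ℤ)) (x : (ℤ × ℤ) → A) (v : ℤ × ℤ) : ℤ × ℤ :=
  zsum (fun k => fce σ x (k, 0) (k + 1, 0)) v.1 +
    zsum (fun j => fce σ x (v.1, j) (v.1, j + 1)) v.2

lemma pot_up (σ : Subst A (ℤ × ℤ)) (x : (ℤ × ℤ) → A) (p q : ℤ) :
    pot σ x (p, q + 1) = pot σ x (p, q) + fce σ x (p, q) (p, q + 1) := by
  simp only [pot]
  rw [zsum_succ]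
  abel

lemma pot_right {S : Set ((ℤ × ℤ) → A)} (σ : Subst A (ℤ × ℤ)) (x : (ℤ × ℤ) → A)
    (h : PDominoComplete σ S) (hx : x ∈ S)
    (H2 : ∀ P : Finset ((ℤ × ℤ) × A), IsTwoByTwo P → AppearsInSys S P → σ.ConsistentOn P)
    (p q : ℤ) :
    pot σ x (p + 1, q) = pot σ x (p, q) + fce σ x (p, q) (p + 1, q) := by
  have hcol : zsum (fun j => fce σ x (p + 1, j) (p + 1, j + 1)) q
      - zsum (fun j => fce σ x (p, j) (p, j + 1)) q
      = fce σ x (p, q) (p + 1, q) - fce σ x (p, 0) (p + 1, 0) := by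
    rw [← zsum_sub]
    have : (fun j => fce σ x (p + 1, j) (p + 1, j + 1) - fce σ x (p, j) (p, j + 1))
        = (fun j => fce σ x (p, j + 1) (p + 1, j + 1) - fce σ x (p, j) (p + 1, j)) := by
      funext j
      have := relB σ x h hx H2 p j
      have h2 : fce σ x (p + 1, j) (p + 1, j + 1)
          = fce σ x (p, j) (p, j + 1) + fce σ x (p, j + 1) (p + 1, j + 1)
            - fce σ x (p, j) (p + 1, j) := by
        rw [← this]; abel
      rw [h2]; abel
    rw [this, zsum_telescope (fun j => fce σ x (p, j) (p + 1, j)) q]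
  simp only [pot]
  rw [zsum_succ]
  linear_combination hcol

end Aux3
section Aux4

variable {A : Type*}

lemma fce_step {S : Set ((ℤ × ℤ) → A)} (σ : Subst A (ℤ × ℤ)) (x : (ℤ × ℤ) → A)
    (h : PDominoComplete σ S) (hx : x ∈ S)
    (H2 : ∀ P : Finset ((ℤ × ℤ) × A), IsTwoByTwo P → AppearsInSys S P → σ.ConsistentOn P)
    (u u' : ℤ × ℤ) (hs : (σ.ruleVec (u, x u) (u', x u')).isSome) :
    fce σ x u u' = pot σ x u' - pot σ x u := by
  have hd := diff_of_isSome σ h (u, x u) (u', x u') hs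
  obtain ⟨p, q⟩ := u
  obtain ⟨p', q'⟩ := u'
  simp only [Prod.mk_sub_mk, Prod.mk.injEq] at hd
  rcases hd with ⟨e1, e2⟩ | ⟨e1, e2⟩ | ⟨e1, e2⟩ | ⟨e1, e2⟩
  · obtain rfl : p' = p + 1 := by omega
    obtain rfl : q' = q := by omega
    rw [pot_right σ x h hx H2 p q']; abel
  · obtain rfl : p = p' + 1 := by omega
    obtain rfl : q' = q := by omega
    have h1 := relA1 σ x h hx H2 p' q'
    have h2 := pot_right σ x h hx H2 p' q'
    linear_combination h1 + h2
  · obtain rfl : q' = q + 1 := by omega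
    obtain rfl : p' = p := by omega
    rw [pot_up σ x p' q]; abel
  · obtain rfl : q = q' + 1 := by omega
    obtain rfl : p' = p := by omega
    have h1 := relA2 σ x h hx H2 p' q'
    have h2 := pot_up σ x p' q'
    linear_combination h1 + h2

lemma omega_path {S : Set ((ℤ × ℤ) → A)} (σ : Subst A (ℤ × ℤ)) (x : (ℤ × ℤ) → A)
    (h : PDominoComplete σ S) (hx : x ∈ S)
    (H2 : ∀ P : Finset ((ℤ × ℤ) × A), IsTwoByTwo P → AppearsInSys S P → σ.ConsistentOn P)
    (w0 : ℤ × ℤ) :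
    ∀ (γ : List ((ℤ × ℤ) × A)) (a b : (ℤ × ℤ) × A),
      γ.Chain' (fun c c' => (σ.ruleVec c c').isSome) →
      (∀ c ∈ γ, x (c.1 + w0) = c.2) →
      γ.head? = some a → γ.getLast? = some b →
      σ.omega γ = pot σ x (b.1 + w0) - pot σ x (a.1 + w0)
  | [], a, b => by simp
  | [c], a, b => by
      intro _ _ hh hl
      simp only [List.head?_cons, List.getLast?_singleton, Option.some.injEq] at hh hl
      subst hh; subst hl
      simp [omega_single]
  | c :: c' :: l, a, b => by
      intro hch hcell hh hl
      simp only [List.head?_cons, Option.some.injEq] at hh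
      subst hh
      rw [List.getLast?_cons_cons] at hl
      obtain ⟨hstep, hch'⟩ := List.isChain_cons_cons.1 hch
      have ih := omega_path σ x h hx H2 w0 (c' :: l) c' b hch'
        (fun cc hcc => hcell cc (List.mem_cons_of_mem _ hcc)) rfl hl
      have ec : c = (c.1, x (c.1 + w0)) :=
        Prod.ext rfl (hcell c (by simp)).symm
      have ec' : c' = (c'.1, x (c'.1 + w0)) :=
        Prod.ext rfl (hcell c' (by simp)).symm
      have key : σ.ruleVec c c'
          = σ.ruleVec (c.1 + w0, x (c.1 + w0)) (c'.1 + w0, x (c'.1 + w0)) := by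
        conv_lhs => rw [ec, ec']
        exact (ruleVec_translate σ c.1 c'.1 w0 _ _).symm
      have hs : (σ.ruleVec (c.1 + w0, x (c.1 + w0)) (c'.1 + w0, x (c'.1 + w0))).isSome := by
        rw [← key]; exact hstep
      have hfs := fce_step σ x h hx H2 (c.1 + w0) (c'.1 + w0) hs
      rw [omega_cons, ih]
      have : (σ.ruleVec c c').getD 0 = fce σ x (c.1 + w0) (c'.1 + w0) := by
        rw [key]; rfl
      rw [this, hfs]
      abel

end Aux4

/-- Theorem `decconsmieux`.  Let `S ⊆ A^{ℤ²}` and let `𝒫`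
be the set of `2 × 2` patterns appearing in configurations of `S`.  A
`𝒫`-domino-complete substitution is consistent on every `C_σ`-covered
pattern appearing in a configuration of `S` if and only if it is consistent
on every `2 × 2` pattern appearing in a configuration of `S`. -/
theorem pDominoComplete_consistent_iff_twoByTwo {A : Type*} [Fintype A]
    (S : Set ((ℤ × ℤ) → A)) (σ : Subst A (ℤ × ℤ)) (h : PDominoComplete σ S) :
    (∀ P : Finset ((ℤ × ℤ) × A), IsPattern P → AppearsInSys S P →
        σ.Covered P → σ.ConsistentOn P) ↔
    (∀ P : Finset ((ℤ × ℤ) × A), IsTwoByTwo P → AppearsInSys S P →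
        σ.ConsistentOn P) := by
  constructor
  · intro Hc P hP2 hApp
    obtain ⟨hPat, w, himg⟩ := hP2
    refine Hc P hPat hApp ?_
    obtain ⟨x, hx, w0, happ⟩ := hApp
    have hwa : w ∈ P.image Prod.fst := by rw [himg]; simp
    obtain ⟨a, haP, ha⟩ := Finset.mem_image.1 hwa
    have hwb : w + (1,0) ∈ P.image Prod.fst := by rw [himg]; simp
    obtain ⟨b, hbP, hb⟩ := Finset.mem_image.1 hwb
    have hwe : w + (0,1) ∈ P.image Prod.fst := by rw [himg]; simp
    obtain ⟨e, heP, he⟩ := Finset.mem_image.1 hwe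
    have hwd : w + (1,1) ∈ P.image Prod.fst := by rw [himg]; simp
    obtain ⟨d, hdP, hd2⟩ := Finset.mem_image.1 hwd
    have hab := adj_isSome σ h x hx w0 a b (happ a haP) (happ b hbP)
      (Or.inl (by rw [hb, ha]))
    have hae := adj_isSome σ h x hx w0 a e (happ a haP) (happ e heP)
      (Or.inr (by rw [he, ha]))
    have hbd := adj_isSome σ h x hx w0 b d (happ b hbP) (happ d hdP)
      (Or.inr (by rw [hd2, hb, add_assoc]; norm_num))
    have hed := adj_isSome σ h x hx w0 e d (happ e heP) (happ d hdP)
      (Or.inl (by rw [hd2, he, add_assoc]; norm_num))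
    have hclass : ∀ c ∈ P, c = a ∨ c = b ∨ c = e ∨ c = d := by
      intro c hc
      have hcim : c.1 ∈ P.image Prod.fst := Finset.mem_image_of_mem _ hc
      rw [himg] at hcim
      simp only [Finset.mem_insert, Finset.mem_singleton] at hcim
      rcases hcim with h1 | h1 | h1 | h1
      · exact Or.inl (hPat c hc a haP (by rw [h1, ha]))
      · exact Or.inr (Or.inl (hPat c hc b hbP (by rw [h1, hb])))
      · exact Or.inr (Or.inr (Or.inl (hPat c hc e heP (by rw [h1, he]))))
      · exact Or.inr (Or.inr (Or.inr (hPat c hc d hdP (by rw [h1, hd2]))))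
    intro c hc c' hc'
    rcases hclass c hc with hq | hq | hq | hq <;>
      rcases hclass c' hc' with hq' | hq' | hq' | hq' <;> rw [hq, hq']
    · exact ⟨[a], mk_path σ P hPat _ (by simp) (by simp [List.Chain']) (by simp [haP]), rfl, rfl⟩
    · exact ⟨[a,b], mk_path σ P hPat _ (by simp)
        (by simp [List.Chain', List.isChain_cons_cons, hab.1]) (by simp [haP, hbP]), rfl, rfl⟩
    · exact ⟨[a,e], mk_path σ P hPat _ (by simp)
        (by simp [List.Chain', List.isChain_cons_cons, hae.1]) (by simp [haP, heP]), rfl, rfl⟩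
    · exact ⟨[a,b,d], mk_path σ P hPat _ (by simp)
        (by simp [List.Chain', List.isChain_cons_cons, hab.1, hbd.1]) (by simp [haP, hbP, hdP]), rfl, rfl⟩
    · exact ⟨[b,a], mk_path σ P hPat _ (by simp)
        (by simp [List.Chain', List.isChain_cons_cons, hab.2]) (by simp [haP, hbP]), rfl, rfl⟩
    · exact ⟨[b], mk_path σ P hPat _ (by simp) (by simp [List.Chain']) (by simp [hbP]), rfl, rfl⟩
    · exact ⟨[b,a,e], mk_path σ P hPat _ (by simp)
        (by simp [List.Chain', List.isChain_cons_cons, hab.2, hae.1]) (by simp [haP, hbP, heP]), rfl, rfl⟩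
    · exact ⟨[b,d], mk_path σ P hPat _ (by simp)
        (by simp [List.Chain', List.isChain_cons_cons, hbd.1]) (by simp [hbP, hdP]), rfl, rfl⟩
    · exact ⟨[e,a], mk_path σ P hPat _ (by simp)
        (by simp [List.Chain', List.isChain_cons_cons, hae.2]) (by simp [haP, heP]), rfl, rfl⟩
    · exact ⟨[e,a,b], mk_path σ P hPat _ (by simp)
        (by simp [List.Chain', List.isChain_cons_cons, hae.2, hab.1]) (by simp [haP, hbP, heP]), rfl, rfl⟩
    · exact ⟨[e], mk_path σ P hPat _ (by simp) (by simp [List.Chain']) (by simp [heP]), rfl, rfl⟩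
    · exact ⟨[e,d], mk_path σ P hPat _ (by simp)
        (by simp [List.Chain', List.isChain_cons_cons, hed.1]) (by simp [heP, hdP]), rfl, rfl⟩
    · exact ⟨[d,b,a], mk_path σ P hPat _ (by simp)
        (by simp [List.Chain', List.isChain_cons_cons, hbd.2, hab.2]) (by simp [haP, hbP, hdP]), rfl, rfl⟩
    · exact ⟨[d,b], mk_path σ P hPat _ (by simp)
        (by simp [List.Chain', List.isChain_cons_cons, hbd.2]) (by simp [hbP, hdP]), rfl, rfl⟩
    · exact ⟨[d,e], mk_path σ P hPat _ (by simp)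
        (by simp [List.Chain', List.isChain_cons_cons, hed.2]) (by simp [heP, hdP]), rfl, rfl⟩
    · exact ⟨[d], mk_path σ P hPat _ (by simp) (by simp [List.Chain']) (by simp [hdP]), rfl, rfl⟩
  · intro H2 P hPat hApp _hcov
    obtain ⟨x, hx, w0, happ⟩ := hApp
    intro γ γ' hγ hγ' hh hl
    obtain ⟨⟨hne, hch, _⟩, hmem⟩ := hγ
    obtain ⟨⟨hne', hch', _⟩, hmem'⟩ := hγ'
    obtain ⟨a, ha⟩ : ∃ a, γ.head? = some a := by
      cases γ with
      | nil => exact absurd rfl hne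
      | cons c l => exact ⟨c, rfl⟩
    obtain ⟨b, hb⟩ : ∃ b, γ.getLast? = some b := by
      rcases hgl : γ.getLast? with _ | b
      · rw [List.getLast?_eq_none_iff] at hgl; exact absurd hgl hne
      · exact ⟨b, rfl⟩
    rw [omega_path σ x h hx H2 w0 γ a b hch (fun c hc => happ c (hmem c hc)) ha hb,
      omega_path σ x h hx H2 w0 γ' a b hch' (fun c hc => happ c (hmem' c hc))
        (hh ▸ ha) (hl ▸ hb)]
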